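/- For t ∈ (−1,1) \ {0} and θ ∈ [0, 2π), let π_θ^t denote the orthogonal projection of ℝ³ onto the orthogonal complement of γ_t(θ) = (√(1−t²) cos θ, √(1−t²) sin θ, t), write π_θ = π_θ^{1/√2}, and let B_t : ℝ³ → ℝ³ be the invertible linear map B_t(x, y, r) = (x, y, r√(1−t²)/t). Then for every set K ⊂ ℝ³ and every θ ∈ [0, 2π), dim_H π_θ^t(K) = dim_H π_θ(B_t(K)). -/

import Mathlib

open MeasureTheory Metric Real

open scoped RealInnerProductSpace

/-- `ℝ³` as a Euclidean space. -/
noncomputable abbrev E3 := EuclideanSpace ℝ (Fin 3)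

/-- The vector `(a, b, c) ∈ ℝ³`. -/
noncomputable def vec3 (a b c : ℝ) : E3 := (WithLp.equiv 2 (Fin 3 → ℝ)).symm ![a, b, c]

/-- The unit vector `γ_t(θ) = (√(1−t²) cos θ, √(1−t²) sin θ, t)`. -/
noncomputable def gammaT (t θ : ℝ) : E3 :=
  vec3 (Real.sqrt (1 - t ^ 2) * Real.cos θ) (Real.sqrt (1 - t ^ 2) * Real.sin θ) t

/-- The orthogonal projection `π_θ^t` of `ℝ³` onto `γ_t(θ)^⊥`, viewed as a map `ℝ³ → ℝ³`. -/
noncomputable def projT (t θ : ℝ) (z : E3) : E3 :=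
  (Submodule.orthogonalProjection (ℝ ∙ gammaT t θ)ᗮ z : E3)

/-- The invertible linear map `B_t(x, y, r) = (x, y, r√(1−t²)/t)`. -/
noncomputable def Bt (t : ℝ) (z : E3) : E3 := vec3 (z 0) (z 1) (z 2 * Real.sqrt (1 - t ^ 2) / t)

lemma vec3_apply (a b c : ℝ) : (vec3 a b c 0 = a) ∧ (vec3 a b c 1 = b) ∧ (vec3 a b c 2 = c) := by
  refine ⟨rfl, rfl, rfl⟩

lemma inner_gamma_self (t θ : ℝ) (ht : t ∈ Set.Ioo (-1 : ℝ) 1) :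
    ⟪gammaT t θ, gammaT t θ⟫ = 1 := by
  have h1 : (0:ℝ) ≤ 1 - t ^ 2 := by nlinarith [ht.1, ht.2]
  have hs : Real.sqrt (1 - t ^ 2) * Real.sqrt (1 - t ^ 2) = 1 - t ^ 2 :=
    Real.mul_self_sqrt h1
  simp only [gammaT, vec3, PiLp.inner_apply, RCLike.inner_apply, starRingEnd_apply]
  simp [Fin.sum_univ_three]
  nlinarith [Real.sin_sq_add_cos_sq θ]

lemma norm_gamma (t θ : ℝ) (ht : t ∈ Set.Ioo (-1 : ℝ) 1) : ‖gammaT t θ‖ = 1 := by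
  have := inner_gamma_self t θ ht
  rw [real_inner_self_eq_norm_sq] at this
  nlinarith [norm_nonneg (gammaT t θ)]

lemma projT_eq (t θ : ℝ) (ht : t ∈ Set.Ioo (-1 : ℝ) 1) (z : E3) :
    projT t θ z = z - ⟪gammaT t θ, z⟫ • gammaT t θ := by
  rw [projT, ← Submodule.starProjection_apply, Submodule.starProjection_orthogonal_val,
    Submodule.starProjection_singleton,
    norm_gamma t θ ht]
  norm_num

lemma Bt_linear (t : ℝ) : IsLinearMap ℝ (Bt t) := by
  constructor
  · intro x y
    apply PiLp.ext
    intro i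
    fin_cases i <;> simp [Bt, vec3] <;> ring
  · intro c x
    apply PiLp.ext
    intro i
    fin_cases i <;> simp [Bt, vec3] <;> ring

lemma half_mem : (Real.sqrt 2)⁻¹ ∈ Set.Ioo (-1 : ℝ) 1 := by
  constructor
  · have h : (0:ℝ) ≤ (Real.sqrt 2)⁻¹ := by positivity
    linarith
  · rw [inv_lt_one_iff₀]
    right
    nlinarith [Real.sq_sqrt (by norm_num : (2:ℝ) ≥ 0), Real.sqrt_nonneg 2]

lemma Bt_gamma (t θ : ℝ) (ht : t ∈ Set.Ioo (-1 : ℝ) 1) (ht0 : t ≠ 0) :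
    Bt t (gammaT t θ) =
      (Real.sqrt (1 - t ^ 2) * Real.sqrt 2) • gammaT (Real.sqrt 2)⁻¹ θ := by
  have h2 : Real.sqrt 2 > 0 := Real.sqrt_pos.mpr (by norm_num)
  have hinv : Real.sqrt (1 - ((Real.sqrt 2)⁻¹) ^ 2) = (Real.sqrt 2)⁻¹ := by
    rw [inv_pow, Real.sq_sqrt (by norm_num : (0:ℝ) ≤ 2)]
    rw [show (1 : ℝ) - (2:ℝ)⁻¹ = (2:ℝ)⁻¹ by norm_num]
    rw [← Real.sqrt_inv]
  have hinv2 : Real.sqrt (1 - (2:ℝ)⁻¹) = (Real.sqrt 2)⁻¹ := by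
    rw [show (1 : ℝ) - (2:ℝ)⁻¹ = (2:ℝ)⁻¹ by norm_num, Real.sqrt_inv]
  apply PiLp.ext
  intro i
  fin_cases i <;>
    simp only [Bt, gammaT, vec3, WithLp.equiv_symm_apply, PiLp.toLp_apply, PiLp.smul_apply, smul_eq_mul] <;>
    simp [Matrix.cons_val_zero, Matrix.cons_val_one, hinv, hinv2] <;>
    field_simp <;> first | ring | (rw [Real.sqrt_one]; ring)

lemma projT_linear (t θ : ℝ) : IsLinearMap ℝ (projT t θ) := by
  constructor
  · intro x y; simp [projT, map_add]
  · intro c x; simp [projT, _root_.map_smul]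

lemma inner_gamma_projT (t θ : ℝ) (z : E3) : ⟪gammaT t θ, projT t θ z⟫ = 0 := by
  have h := (Submodule.orthogonalProjection (ℝ ∙ gammaT t θ)ᗮ z).2
  exact Submodule.mem_orthogonal_singleton_iff_inner_right.mp h

/-- The correcting linear map `M z = π'(B_t z) + ⟪γ_t, z⟫ γ'`. -/
noncomputable def Mfun (t θ : ℝ) (z : E3) : E3 :=
  projT (Real.sqrt 2)⁻¹ θ (Bt t z) + ⟪gammaT t θ, z⟫ • gammaT (Real.sqrt 2)⁻¹ θ

lemma Mfun_linear (t θ : ℝ) : IsLinearMap ℝ (Mfun t θ) := by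
  constructor
  · intro x y
    simp only [Mfun, (Bt_linear t).map_add, (projT_linear _ θ).map_add, inner_add_right,
      add_smul]
    abel
  · intro c x
    simp only [Mfun, (Bt_linear t).map_smul, (projT_linear _ θ).map_smul,
      real_inner_smul_right, mul_smul, smul_add]

lemma key_identity (t θ : ℝ) (ht : t ∈ Set.Ioo (-1 : ℝ) 1) (ht0 : t ≠ 0) (z : E3) :
    projT (Real.sqrt 2)⁻¹ θ (Bt t z) = Mfun t θ (projT t θ z) := by
  have hs := half_mem
  set γ := gammaT t θ with hγ
  set γ' := gammaT (Real.sqrt 2)⁻¹ θ with hγ'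
  set c := Real.sqrt (1 - t ^ 2) * Real.sqrt 2 with hc
  have hBγ : Bt t γ = c • γ' := Bt_gamma t θ ht ht0
  have hγγ : ⟪γ, γ⟫ = 1 := inner_gamma_self t θ ht
  have hγ'γ' : ⟪γ', γ'⟫ = 1 := inner_gamma_self _ θ hs
  rw [Mfun, projT_eq t θ ht, (Bt_linear t).map_sub, (Bt_linear t).map_smul, hBγ,
    projT_eq _ θ hs, projT_eq _ θ hs]
  rw [inner_sub_right, inner_sub_right, real_inner_smul_right, real_inner_smul_right,
    real_inner_smul_right, hγγ, hγ'γ']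
  module

/-- Explicit inverse of `Bt`. -/
noncomputable def Btinv (t : ℝ) (z : E3) : E3 := vec3 (z 0) (z 1) (z 2 * t / Real.sqrt (1 - t ^ 2))

lemma Btinv_Bt (t : ℝ) (ht : t ∈ Set.Ioo (-1 : ℝ) 1) (ht0 : t ≠ 0) (z : E3) :
    Btinv t (Bt t z) = z := by
  have h1 : (0:ℝ) < 1 - t ^ 2 := by nlinarith [ht.1, ht.2]
  have hs : Real.sqrt (1 - t ^ 2) ≠ 0 := ne_of_gt (Real.sqrt_pos.mpr h1)
  apply PiLp.ext
  intro i
  fin_cases i <;> simp [Btinv, Bt, vec3] <;> field_simp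

lemma Bt_injective (t : ℝ) (ht : t ∈ Set.Ioo (-1 : ℝ) 1) (ht0 : t ≠ 0) :
    Function.Injective (Bt t) := by
  intro a b h
  have := congrArg (Btinv t) h
  rwa [Btinv_Bt t ht ht0, Btinv_Bt t ht ht0] at this

lemma Mfun_injective (t θ : ℝ) (ht : t ∈ Set.Ioo (-1 : ℝ) 1) (ht0 : t ≠ 0) :
    Function.Injective (Mfun t θ) := by
  have hs := half_mem
  have hlin := Mfun_linear t θ
  suffices hinj : Function.Injective (⇑(IsLinearMap.mk' _ hlin)) from hinj
  refine (injective_iff_map_eq_zero (IsLinearMap.mk' _ hlin)).mpr ?_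
  intro z hz
  simp only [IsLinearMap.mk'_apply] at hz
  set γ := gammaT t θ with hγ
  set γ' := gammaT (Real.sqrt 2)⁻¹ θ with hγ'
  have hγ'γ' : ⟪γ', γ'⟫ = 1 := inner_gamma_self _ θ hs
  have hγγ : ⟪γ, γ⟫ = 1 := inner_gamma_self t θ ht
  -- inner with γ' kills the first summand
  have h1 : ⟪γ, z⟫ = 0 := by
    have h := congrArg (fun w => ⟪γ', w⟫) hz
    simp only [Mfun, inner_add_right, real_inner_smul_right, inner_zero_right] at h
    rw [inner_gamma_projT, hγ'γ', mul_one, zero_add] at h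
    exact h
  have h2 : projT (Real.sqrt 2)⁻¹ θ (Bt t z) = 0 := by
    have : Mfun t θ z = projT (Real.sqrt 2)⁻¹ θ (Bt t z) := by
      simp [Mfun, ← hγ, h1]
    rw [← this, hz]
  have h3 : Bt t z = ⟪γ', Bt t z⟫ • γ' := by
    have h := projT_eq (Real.sqrt 2)⁻¹ θ hs (Bt t z)
    rw [h2] at h
    exact sub_eq_zero.mp h.symm
  set c := Real.sqrt (1 - t ^ 2) * Real.sqrt 2 with hc
  have hcpos : 0 < c := by
    have h1 : (0:ℝ) < 1 - t ^ 2 := by nlinarith [ht.1, ht.2]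
    have := Real.sqrt_pos.mpr h1
    have h2' : (0:ℝ) < Real.sqrt 2 := Real.sqrt_pos.mpr (by norm_num)
    positivity
  have hBγ : Bt t γ = c • γ' := Bt_gamma t θ ht ht0
  set s := ⟪γ', Bt t z⟫ with hsdef
  have h4 : Bt t z = Bt t ((s / c) • γ) := by
    rw [(Bt_linear t).map_smul, hBγ, smul_smul, div_mul_cancel₀ _ (ne_of_gt hcpos), h3]
  have h5 : z = (s / c) • γ := Bt_injective t ht ht0 h4
  have h6 : s / c = 0 := by
    have := h1
    rw [h5, real_inner_smul_right, hγγ, mul_one] at this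
    exact this
  rw [h5, h6, zero_smul]

/-- For `t ∈ (−1,1) \ {0}`, every set `K ⊂ ℝ³` and every `θ ∈ [0, 2π)`,
`dim_H π_θ^t(K) = dim_H π_θ(B_t(K))`, where `π_θ = π_θ^{1/√2}`. -/
theorem stmt4 (t : ℝ) (ht : t ∈ Set.Ioo (-1 : ℝ) 1) (ht0 : t ≠ 0)
    (K : Set E3) (θ : ℝ) (hθ : θ ∈ Set.Ico (0 : ℝ) (2 * π)) :
    dimH (projT t θ '' K) = dimH (projT (Real.sqrt 2)⁻¹ θ '' (Bt t '' K)) := by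
  let Mlin : E3 →ₗ[ℝ] E3 := IsLinearMap.mk' _ (Mfun_linear t θ)
  have hinj : Function.Injective Mlin := Mfun_injective t θ ht ht0
  have hbij : Function.Bijective Mlin :=
    ⟨hinj, (LinearMap.injective_iff_surjective).mp hinj⟩
  let e : E3 ≃L[ℝ] E3 := (LinearEquiv.ofBijective Mlin hbij).toContinuousLinearEquiv
  have him : projT (Real.sqrt 2)⁻¹ θ '' (Bt t '' K) = ⇑e '' (projT t θ '' K) := by
    rw [Set.image_image, Set.image_image]
    exact Set.image_congr' (fun z => key_identity t θ ht ht0 z)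
  rw [him, ContinuousLinearEquiv.dimH_image]
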